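/- For Hermitian positive semidefinite matrices S (n×n) and N (n×n) with I + N invertible, the function f(t) = log det(I + tN + S) − log det(I + tN) is nonincreasing in t ≥ 0, with derivative f'(t) = Tr(N[(I + tN + S)^{-1} − (I + tN)^{-1}]) ≤ 0. -/

import Mathlib

open Matrix MeasureTheory Filter
open scoped ComplexOrder Matrix.Norms.L2Operator

section Aux

open Polynomial

lemma aux_smul_psd {n : ℕ} {N : Matrix (Fin n) (Fin n) ℂ} (hN : N.PosSemidef) {t : ℝ} (ht : 0 ≤ t) :
    ((t:ℂ) • N).PosSemidef := by
  refine .of_dotProduct_mulVec_nonneg ?_ (fun x => ?_)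
  · unfold Matrix.IsHermitian
    rw [conjTranspose_smul, hN.1.eq, Complex.star_def, Complex.conj_ofReal]
  · rw [smul_mulVec, dotProduct_smul, smul_eq_mul]
    exact mul_nonneg (by exact_mod_cast ht) (hN.dotProduct_mulVec_nonneg x)

lemma aux_diag_nonneg {n : ℕ} {M : Matrix (Fin n) (Fin n) ℂ} (hM : M.PosSemidef) (i : Fin n) :
    0 ≤ M i i := by
  simpa [dotProduct, mulVec, Pi.single_apply, Finset.sum_ite_eq] using hM.dotProduct_mulVec_nonneg (Pi.single i 1)

lemma aux_trace_nonneg {n : ℕ} {M : Matrix (Fin n) (Fin n) ℂ} (hM : M.PosSemidef) :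
    0 ≤ M.trace :=
  Finset.sum_nonneg fun i _ => aux_diag_nonneg hM i

open scoped MatrixOrder in
lemma aux_trace_mul_nonneg {n : ℕ} {A B : Matrix (Fin n) (Fin n) ℂ}
    (hA : A.PosSemidef) (hB : B.PosSemidef) : 0 ≤ (A * B).trace := by
  obtain ⟨C, rfl⟩ := CStarAlgebra.nonneg_iff_eq_star_mul_self.mp hB.nonneg
  rw [← mul_assoc, trace_mul_cycle]
  exact aux_trace_nonneg (hA.mul_mul_conjTranspose_same C)

lemma aux_inv_sub_inv_psd {n : ℕ} {B S : Matrix (Fin n) (Fin n) ℂ}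
    (hB : B.PosDef) (hS : S.PosSemidef) :
    (B⁻¹ - (B + S)⁻¹).PosSemidef := by
  set A := B + S with hAdef
  have hA : A.PosDef := hB.add_posSemidef hS
  have hBu : IsUnit B.det := (Matrix.isUnit_iff_isUnit_det B).mp hB.isUnit
  have hAu : IsUnit A.det := (Matrix.isUnit_iff_isUnit_det A).mp hA.isUnit
  refine .of_dotProduct_mulVec_nonneg ((hB.posSemidef.inv.1).sub (hA.posSemidef.inv.1)) (fun x => ?_)
  set z := A⁻¹ *ᵥ x with hzdef
  set w := B⁻¹ *ᵥ x with hwdef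
  have hz : A *ᵥ z = x := by rw [hzdef, mulVec_mulVec, mul_nonsing_inv _ hAu, one_mulVec]
  have hw : B *ᵥ w = x := by rw [hwdef, mulVec_mulVec, mul_nonsing_inv _ hBu, one_mulVec]
  have hs0 : 0 ≤ star z ⬝ᵥ (S *ᵥ z) := hS.dotProduct_mulVec_nonneg z
  have e1 : star w ⬝ᵥ (B *ᵥ z) = star x ⬝ᵥ z := by
    rw [dotProduct_mulVec, show star w ᵥ* B = star x from by rw [← hB.1.eq, ← star_mulVec, hw]]
  have e2 : star x ⬝ᵥ z = star z ⬝ᵥ x := by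
    conv_lhs => rw [← hz, star_mulVec, hA.1.eq, ← dotProduct_mulVec, hz]
  have e3 : star x ⬝ᵥ w = star w ⬝ᵥ x := by
    conv_lhs => rw [← hw, star_mulVec, hB.1.eq, ← dotProduct_mulVec, hw]
  have e4 : star z ⬝ᵥ (B *ᵥ z) = star z ⬝ᵥ x - star z ⬝ᵥ (S *ᵥ z) := by
    have : B *ᵥ z = x - S *ᵥ z := by
      rw [show B = A - S from by rw [hAdef]; abel, sub_mulVec, hz]
    rw [this, dotProduct_sub]
  have key : 0 ≤ star (z - w) ⬝ᵥ (B *ᵥ (z - w)) := hB.posSemidef.dotProduct_mulVec_nonneg _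
  rw [mulVec_sub, hw, star_sub, sub_dotProduct, dotProduct_sub, dotProduct_sub, e4, e1, e2] at key
  rw [sub_mulVec, dotProduct_sub, e3, ← hzdef, e2]
  have hre : star w ⬝ᵥ x - star z ⬝ᵥ x =
      ((star z ⬝ᵥ x - star z ⬝ᵥ (S *ᵥ z) - star z ⬝ᵥ x) - (star z ⬝ᵥ x - star w ⬝ᵥ x))
        + star z ⬝ᵥ (S *ᵥ z) := by ring
  rw [hre]
  exact add_nonneg key hs0

lemma aux_det_hasDerivAt {n : ℕ} (N M0 : Matrix (Fin n) (Fin n) ℂ) (t0 : ℝ)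
    (hM : IsUnit (M0 + (t0:ℂ) • N).det) :
    HasDerivAt (fun t : ℝ => (M0 + (t:ℂ) • N).det)
      ((M0 + (t0:ℂ) • N).det * ((M0 + (t0:ℂ) • N)⁻¹ * N).trace) t0 := by
  set M := M0 + (t0:ℂ) • N with hMdef
  set B := M⁻¹ * N with hBdef
  set P : Polynomial ℂ := (det (1 + (X : ℂ[X]) • B.map C)).divX.divX with hPdef
  have hfact : ∀ z : ℂ, M0 + z • N = M * (1 + (z - t0) • B) := by
    intro z
    rw [mul_add, mul_one, mul_smul_comm, hBdef, ← mul_assoc, mul_nonsing_inv _ hM, one_mul,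
      hMdef, sub_smul]
    abel
  have hdet : ∀ z : ℂ, (M0 + z • N).det =
      M.det * (1 + B.trace * (z - t0) + P.eval (z - t0) * (z - t0) ^ 2) := by
    intro z
    rw [hfact z, det_mul, det_one_add_smul]
  have h1 : HasDerivAt (fun z : ℂ => z - (t0:ℂ)) 1 (t0:ℂ) := (hasDerivAt_id _).sub_const _
  have hP : HasDerivAt (fun z : ℂ => P.eval (z - t0)) (P.derivative.eval 0 * 1) (t0:ℂ) := by
    have h0 : HasDerivAt ((fun z : ℂ => P.eval z) ∘ (fun z : ℂ => z - t0))
        (P.derivative.eval ((t0:ℂ) - t0) * 1) (t0:ℂ) :=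
      HasDerivAt.comp _ (P.hasDerivAt _) h1
    simpa [Function.comp_def, sub_self] using h0
  have hsq : HasDerivAt (fun z : ℂ => (z - (t0:ℂ)) ^ 2)
      (2 * ((t0:ℂ) - t0) ^ 1 * 1) (t0:ℂ) := h1.pow 2
  have hF : HasDerivAt (fun z : ℂ => M.det * (1 + B.trace * (z - t0) + P.eval (z - t0) * (z - t0) ^ 2))
      (M.det * B.trace) (t0:ℂ) := by
    have := ((((hasDerivAt_const (t0:ℂ) (1:ℂ)).add (h1.const_mul B.trace)).add
      (hP.mul hsq))).const_mul M.det
    refine this.congr_deriv ?_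
    simp [sub_self]
  have hfun : (fun t : ℝ => (M0 + (t:ℂ) • N).det)
      = fun t : ℝ => M.det * (1 + B.trace * ((t:ℂ) - t0) + P.eval ((t:ℂ) - t0) * ((t:ℂ) - t0) ^ 2) :=
    funext fun t => hdet t
  rw [hfun]
  exact hF.comp_ofReal

lemma aux_logdet_hasDerivAt {n : ℕ} (N M0 : Matrix (Fin n) (Fin n) ℂ) (t0 : ℝ)
    (hM : (M0 + (t0:ℂ) • N).PosDef) :
    HasDerivAt (fun t : ℝ => Real.log ((M0 + (t:ℂ) • N).det.re))
      ((((M0 + (t0:ℂ) • N)⁻¹ * N).trace).re) t0 := by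
  set M := M0 + (t0:ℂ) • N with hMdef
  have hdetpos : 0 < M.det := hM.det_pos
  have hre : 0 < M.det.re := (Complex.lt_def.mp hdetpos).1
  have him : M.det.im = 0 := ((Complex.lt_def.mp hdetpos).2).symm
  have hd := aux_det_hasDerivAt N M0 t0 (isUnit_iff_ne_zero.mpr (ne_of_gt hdetpos))
  have hdre : HasDerivAt (fun t : ℝ => (M0 + (t:ℂ) • N).det.re)
      ((M.det * (M⁻¹ * N).trace).re) t0 :=
    (Complex.reCLM.hasFDerivAt.comp_hasDerivAt t0 hd : )
  have hlog := hdre.log (ne_of_gt hre)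
  have : (M.det * (M⁻¹ * N).trace).re / (M0 + (t0:ℂ) • N).det.re = ((M⁻¹ * N).trace).re := by
    rw [Complex.mul_re, him, ← hMdef]
    field_simp
    ring
  rwa [this] at hlog

end Aux

/-- f(t) = log det(I + tN + S) − log det(I + tN) is nonincreasing with nonpositive derivative. -/
theorem stmt_19 {n : ℕ} (S N : Matrix (Fin n) (Fin n) ℂ) (hS : S.PosSemidef) (hN : N.PosSemidef)
    (hInv : IsUnit ((1 : Matrix (Fin n) (Fin n) ℂ) + N)) :
    AntitoneOn (fun t : ℝ =>
      Real.log (((1 : Matrix (Fin n) (Fin n) ℂ) + (t : ℂ) • N + S).det.re) -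
      Real.log (((1 : Matrix (Fin n) (Fin n) ℂ) + (t : ℂ) • N).det.re)) (Set.Ici 0) ∧
    ∀ t : ℝ, 0 ≤ t →
      HasDerivAt (fun t : ℝ =>
        Real.log (((1 : Matrix (Fin n) (Fin n) ℂ) + (t : ℂ) • N + S).det.re) -
        Real.log (((1 : Matrix (Fin n) (Fin n) ℂ) + (t : ℂ) • N).det.re))
        ((Matrix.trace (N * (((1 : Matrix (Fin n) (Fin n) ℂ) + (t : ℂ) • N + S)⁻¹ -
            ((1 : Matrix (Fin n) (Fin n) ℂ) + (t : ℂ) • N)⁻¹))).re) t ∧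
      (Matrix.trace (N * (((1 : Matrix (Fin n) (Fin n) ℂ) + (t : ℂ) • N + S)⁻¹ -
            ((1 : Matrix (Fin n) (Fin n) ℂ) + (t : ℂ) • N)⁻¹))).re ≤ 0 := by
  have hshape : ∀ z : ℂ, (1 : Matrix (Fin n) (Fin n) ℂ) + z • N + S = (1 + S) + z • N :=
    fun z => add_right_comm _ _ _
  simp only [hshape]
  have main : ∀ t : ℝ, 0 ≤ t →
      HasDerivAt (fun t : ℝ =>
        Real.log ((((1 : Matrix (Fin n) (Fin n) ℂ) + S) + (t : ℂ) • N).det.re) -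
        Real.log (((1 : Matrix (Fin n) (Fin n) ℂ) + (t : ℂ) • N).det.re))
        ((Matrix.trace (N * (((1 + S) + (t : ℂ) • N)⁻¹ -
            ((1 : Matrix (Fin n) (Fin n) ℂ) + (t : ℂ) • N)⁻¹))).re) t ∧
      (Matrix.trace (N * (((1 + S) + (t : ℂ) • N)⁻¹ -
            ((1 : Matrix (Fin n) (Fin n) ℂ) + (t : ℂ) • N)⁻¹))).re ≤ 0 := by
    intro t ht
    have htN : ((t:ℂ) • N).PosSemidef := aux_smul_psd hN ht
    have hB : ((1 : Matrix (Fin n) (Fin n) ℂ) + (t:ℂ) • N).PosDef :=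
      Matrix.PosDef.one.add_posSemidef htN
    have hA : (((1 : Matrix (Fin n) (Fin n) ℂ) + S) + (t:ℂ) • N).PosDef :=
      (Matrix.PosDef.one.add_posSemidef hS).add_posSemidef htN
    have hd1 := aux_logdet_hasDerivAt N (1 + S) t hA
    have hd2 := aux_logdet_hasDerivAt N 1 t hB
    have htr : (Matrix.trace (N * (((1 + S) + (t : ℂ) • N)⁻¹ -
          ((1 : Matrix (Fin n) (Fin n) ℂ) + (t : ℂ) • N)⁻¹))).re =
        ((((1 + S) + (t:ℂ) • N)⁻¹ * N).trace).re -
          ((((1 : Matrix (Fin n) (Fin n) ℂ) + (t:ℂ) • N)⁻¹ * N).trace).re := by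
      rw [mul_sub, trace_sub, trace_mul_comm N, trace_mul_comm N, Complex.sub_re]
    constructor
    · rw [htr]
      exact hd1.sub hd2
    · have hAB : (1 + S) + (t:ℂ) • N = ((1 : Matrix (Fin n) (Fin n) ℂ) + (t:ℂ) • N) + S := by
        abel
      have hpsd : ((((1 : Matrix (Fin n) (Fin n) ℂ) + (t:ℂ) • N)⁻¹ -
          (((1 : Matrix (Fin n) (Fin n) ℂ) + (t:ℂ) • N) + S)⁻¹)).PosSemidef :=
        aux_inv_sub_inv_psd hB hS
      have h0 : 0 ≤ (Matrix.trace (N * (((1 : Matrix (Fin n) (Fin n) ℂ) + (t:ℂ) • N)⁻¹ -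
          (((1 : Matrix (Fin n) (Fin n) ℂ) + (t:ℂ) • N) + S)⁻¹))) :=
        aux_trace_mul_nonneg hN hpsd
    -- trace (N * (A⁻¹ - B⁻¹)) = - trace (N * (B⁻¹ - A⁻¹))
      have hneg : Matrix.trace (N * (((1 + S) + (t : ℂ) • N)⁻¹ -
          ((1 : Matrix (Fin n) (Fin n) ℂ) + (t : ℂ) • N)⁻¹)) =
          - Matrix.trace (N * (((1 : Matrix (Fin n) (Fin n) ℂ) + (t:ℂ) • N)⁻¹ -
          (((1 : Matrix (Fin n) (Fin n) ℂ) + (t:ℂ) • N) + S)⁻¹)) := by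
        rw [hAB, ← trace_neg, ← mul_neg, neg_sub]
      rw [hneg, Complex.neg_re, neg_nonpos]
      exact (Complex.le_def.mp h0).1
  refine ⟨?_, main⟩
  have hcont : ContinuousOn (fun t : ℝ =>
      Real.log ((((1 : Matrix (Fin n) (Fin n) ℂ) + S) + (t : ℂ) • N).det.re) -
      Real.log (((1 : Matrix (Fin n) (Fin n) ℂ) + (t : ℂ) • N).det.re)) (Set.Ici 0) :=
    fun t ht => ((main t ht).1.continuousAt).continuousWithinAt
  refine antitoneOn_of_deriv_nonpos (convex_Ici 0) hcont ?_ ?_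
  · intro t ht
    rw [interior_Ici] at ht
    exact ((main t (le_of_lt ht)).1.differentiableAt).differentiableWithinAt
  · intro t ht
    rw [interior_Ici] at ht
    rw [(main t (le_of_lt ht)).1.deriv]
    exact (main t (le_of_lt ht)).2
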